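/- Let A ∈ ℝ^{n×n}, B ∈ ℝ^{n×ℓ}, let V_k be a matrix with orthonormal columns whose column space contains the block Krylov subspace K_k(A,B), and set H_k = V_kᵀ A V_k. Then for all t, s > 0: ‖(e^{tA} − V_k e^{tH_k} V_kᵀ) e^{sA} B‖ ≤ 4 max{1, e^{(t+s)μ(A)}} (‖(t+s)A‖^k / k!) ‖B‖. -/

import Mathlib

open Matrix
open scoped Matrix.Norms.L2Operator

noncomputable section

/-- The logarithmic norm `μ(A)`: the maximum of the real parts of the field of values
`F(A) = {x* A x : ‖x‖ = 1}` of `A`, viewed as a complex matrix. -/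
def logNorm {n : ℕ} (A : Matrix (Fin n) (Fin n) ℝ) : ℝ :=
  sSup {r : ℝ | ∃ x : EuclideanSpace ℂ (Fin n), ‖x‖ = 1 ∧
    r = (dotProduct (star (x : Fin n → ℂ)) ((A.map Complex.ofReal).mulVec x)).re}

/-- The function `φ₁(z) = (e^z - 1)/z = ∑_{ℓ≥0} z^ℓ/(ℓ+1)!`. -/
def phi1 (z : ℝ) : ℝ := ∑' k : ℕ, z ^ k / (Nat.factorial (k + 1) : ℝ)

/-- Matrix exponential. -/
def mexp {n : ℕ} (A : Matrix (Fin n) (Fin n) ℝ) : Matrix (Fin n) (Fin n) ℝ :=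
  NormedSpace.exp A

/-- The block Krylov subspace `K_k(A,B) = span{B, AB, …, A^{k-1}B}` (the span of
the columns of the matrices `A^i B`, `i < k`). -/
def blockKrylov {n : ℕ} {ι : Type*} (A : Matrix (Fin n) (Fin n) ℝ) (B : Matrix (Fin n) ι ℝ)
    (k : ℕ) : Submodule ℝ (Fin n → ℝ) :=
  Submodule.span ℝ {v | ∃ i < k, ∃ j, v = ((A ^ i * B)ᵀ) j}

/-- The column space of a matrix. -/
def colSpace {n m : ℕ} (V : Matrix (Fin n) (Fin m) ℝ) : Submodule ℝ (Fin n → ℝ) :=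
  Submodule.span ℝ (Set.range Vᵀ)

/-! ### Auxiliary lemmas -/

open scoped RealInnerProductSpace

section Gronwall

lemma exp_apply_norm_le {E : Type*} [NormedAddCommGroup E] [InnerProductSpace ℝ E]
    [CompleteSpace E] (T : E →L[ℝ] E) (c : ℝ) (hT : ∀ x : E, ⟪x, T x⟫ ≤ c * ‖x‖ ^ 2)
    {σ : ℝ} (hσ : 0 ≤ σ) (x : E) :
    ‖NormedSpace.exp (σ • T) x‖ ≤ Real.exp (σ * c) * ‖x‖ := by
  set u : ℝ → E := fun τ => NormedSpace.exp (τ • T) x with hu_def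
  have hu : ∀ τ : ℝ, HasDerivAt u (T (u τ)) τ := by
    intro τ
    have h1 := hasDerivAt_exp_smul_const' (𝕂 := ℝ) T τ
    have h2 := h1.clm_apply (hasDerivAt_const τ x)
    simpa using h2
  set f : ℝ → ℝ := fun τ => ⟪u τ, u τ⟫ with hf_def
  have hf : ∀ τ : ℝ, HasDerivAt f (2 * ⟪u τ, T (u τ)⟫) τ := by
    intro τ
    have := (hu τ).inner ℝ (hu τ)
    refine this.congr_deriv ?_
    rw [real_inner_comm (u τ) (T (u τ))]; ring
  set g : ℝ → ℝ := fun τ => Real.exp (-(2 * c) * τ) * f τ with hg_def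
  have hg : ∀ τ : ℝ, HasDerivAt g
      (Real.exp (-(2 * c) * τ) * (-(2 * c)) * f τ
        + Real.exp (-(2 * c) * τ) * (2 * ⟪u τ, T (u τ)⟫)) τ := by
    intro τ
    have h1 : HasDerivAt (fun τ : ℝ => Real.exp (-(2 * c) * τ))
        (Real.exp (-(2 * c) * τ) * (-(2 * c))) τ := by
      simpa [mul_comm] using ((hasDerivAt_id τ).const_mul (-(2*c))).exp
    exact h1.mul (hf τ)
  have hg' : ∀ τ : ℝ, deriv g τ ≤ 0 := by
    intro τ
    rw [(hg τ).deriv]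
    have h1 : ⟪u τ, T (u τ)⟫ ≤ c * ‖u τ‖ ^ 2 := hT _
    have h2 : f τ = ‖u τ‖ ^ 2 := real_inner_self_eq_norm_sq _
    have h3 : (0:ℝ) < Real.exp (-(2 * c) * τ) := Real.exp_pos _
    rw [h2]
    nlinarith [mul_le_mul_of_nonneg_left h1 h3.le]
  have hmono : Antitone g :=
    antitone_of_deriv_nonpos (fun τ => (hg τ).differentiableAt) hg'
  have h0 : g σ ≤ g 0 := hmono hσ
  have hg0 : g 0 = ‖x‖ ^ 2 := by
    simp [hg_def, hf_def, hu_def, real_inner_self_eq_norm_sq]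
  rw [hg0] at h0
  have hfσ : ‖u σ‖ ^ 2 ≤ Real.exp (2 * c * σ) * ‖x‖ ^ 2 := by
    have h4 := mul_le_mul_of_nonneg_left h0 (Real.exp_pos (2*c*σ)).le
    have h5 : Real.exp (2*c*σ) * (Real.exp (-(2 * c) * σ) * f σ) = f σ := by
      rw [← mul_assoc, ← Real.exp_add]; ring_nf; simp
    rw [h5] at h4
    have h2 : f σ = ‖u σ‖ ^ 2 := real_inner_self_eq_norm_sq _
    linarith [h4, h2.symm.le]
  have hsq : (Real.exp (σ * c) * ‖x‖) ^ 2 = Real.exp (2 * c * σ) * ‖x‖ ^ 2 := by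
    rw [mul_pow, sq (Real.exp (σ*c)), ← Real.exp_add]; ring_nf
  have hpos : (0:ℝ) ≤ Real.exp (σ * c) * ‖x‖ := by positivity
  nlinarith [norm_nonneg (u σ), hfσ]

end Gronwall

section LogNorm

variable {n : ℕ}

lemma euclid_coord_le (z : EuclideanSpace ℂ (Fin n)) (i : Fin n) : ‖z i‖ ≤ ‖z‖ := by
  rw [EuclideanSpace.norm_eq]
  have h1 : ‖z i‖ ^ 2 ≤ ∑ j, ‖z j‖ ^ 2 :=
    Finset.single_le_sum (f := fun j => ‖z j‖ ^ 2) (fun j _ => by positivity) (Finset.mem_univ i)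
  calc ‖z i‖ = Real.sqrt (‖z i‖ ^ 2) := by rw [Real.sqrt_sq (norm_nonneg _)]
  _ ≤ _ := Real.sqrt_le_sqrt h1

lemma quad_re_le (A : Matrix (Fin n) (Fin n) ℝ) (w : Fin n → ℂ)
    (hw : ∀ i, ‖w i‖ ≤ 1) :
    (dotProduct (star w) ((A.map Complex.ofReal).mulVec w)).re ≤ ∑ i, ∑ j, |A i j| := by
  calc (dotProduct (star w) ((A.map Complex.ofReal).mulVec w)).re
      ≤ ‖dotProduct (star w) ((A.map Complex.ofReal).mulVec w)‖ := Complex.re_le_norm _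
    _ ≤ ∑ i, ∑ j, |A i j| := by
        rw [dotProduct]
        refine le_trans (norm_sum_le _ _) (Finset.sum_le_sum fun i _ => ?_)
        rw [norm_mul, Pi.star_apply, norm_star]
        have h2 : ‖((A.map Complex.ofReal).mulVec w) i‖ ≤ ∑ j, |A i j| := by
          simp only [Matrix.mulVec, dotProduct, Matrix.map_apply]
          refine le_trans (norm_sum_le _ _) (Finset.sum_le_sum fun j _ => ?_)
          rw [norm_mul, Complex.norm_real]
          calc ‖A i j‖ * ‖w j‖ ≤ ‖A i j‖ * 1 :=
                mul_le_mul_of_nonneg_left (hw j) (norm_nonneg _)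
          _ = |A i j| := by rw [mul_one, Real.norm_eq_abs]
        calc ‖w i‖ * ‖((A.map Complex.ofReal).mulVec w) i‖ ≤ 1 * (∑ j, |A i j|) :=
              mul_le_mul (hw i) h2 (norm_nonneg _) zero_le_one
        _ = ∑ j, |A i j| := one_mul _

lemma logNorm_bddAbove (A : Matrix (Fin n) (Fin n) ℝ) :
    BddAbove {r : ℝ | ∃ x : EuclideanSpace ℂ (Fin n), ‖x‖ = 1 ∧
      r = (dotProduct (star (x : Fin n → ℂ)) ((A.map Complex.ofReal).mulVec x)).re} := by
  refine ⟨∑ i, ∑ j, |A i j|, ?_⟩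
  rintro r ⟨z, hz, rfl⟩
  exact quad_re_le A _ (fun i => hz ▸ euclid_coord_le z i)

lemma dot_complexify (A : Matrix (Fin n) (Fin n) ℝ) (y : Fin n → ℝ) :
    (dotProduct (star (fun i => (y i : ℂ))) ((A.map Complex.ofReal).mulVec
      (fun i => (y i : ℂ)))).re = dotProduct y (A.mulVec y) := by
  simp only [dotProduct, Matrix.mulVec, Matrix.map_apply, Pi.star_apply,
    Complex.star_def, Complex.conj_ofReal]
  rw [Complex.re_sum]
  congr 1; ext i
  rw [Finset.mul_sum, Complex.re_sum, Finset.mul_sum]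
  congr 1; ext j
  simp [Complex.ofReal_mul]

lemma complexify_norm (y : EuclideanSpace ℝ (Fin n)) :
    ‖((WithLp.equiv 2 _).symm (fun i => (y i : ℂ)) : EuclideanSpace ℂ (Fin n))‖ = ‖y‖ := by
  rw [EuclideanSpace.norm_eq, EuclideanSpace.norm_eq]
  congr 1
  apply Finset.sum_congr rfl
  intro i _
  simp [Complex.norm_real]

lemma inner_clm_eq_dot (A : Matrix (Fin n) (Fin n) ℝ) (y : EuclideanSpace ℝ (Fin n)) :
    ⟪y, toEuclideanCLM (𝕜 := ℝ) A y⟫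
      = dotProduct (fun i => y i) (A.mulVec fun i => y i) := by
  simp only [PiLp.inner_apply, RCLike.inner_apply, conj_trivial]
  rw [dotProduct]; refine Finset.sum_congr rfl fun i _ => ?_; rw [mul_comm]; rfl

lemma dot_eq_inner (x y : EuclideanSpace ℝ (Fin n)) :
    ⟪x, y⟫ = dotProduct (fun i => x i) (fun i => y i) := by
  simp only [PiLp.inner_apply, RCLike.inner_apply, conj_trivial]
  rw [dotProduct]; refine Finset.sum_congr rfl fun i _ => ?_; rw [mul_comm]

lemma inner_le_logNorm (A : Matrix (Fin n) (Fin n) ℝ) (x : EuclideanSpace ℝ (Fin n)) :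
    ⟪x, toEuclideanCLM (𝕜 := ℝ) A x⟫ ≤ logNorm A * ‖x‖ ^ 2 := by
  by_cases hx : x = 0
  · simp [hx]
  · have hr : (0:ℝ) < ‖x‖ := norm_pos_iff.mpr hx
    set w : EuclideanSpace ℝ (Fin n) := ‖x‖⁻¹ • x with hw_def
    have hw : ‖w‖ = 1 := by
      rw [hw_def, norm_smul, norm_inv, norm_norm, inv_mul_cancel₀ hr.ne']
    have hmem : ⟪w, toEuclideanCLM (𝕜 := ℝ) A w⟫ ∈
        {r : ℝ | ∃ z : EuclideanSpace ℂ (Fin n), ‖z‖ = 1 ∧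
          r = (dotProduct (star (z : Fin n → ℂ)) ((A.map Complex.ofReal).mulVec z)).re} := by
      refine ⟨(WithLp.equiv 2 _).symm (fun i => (w i : ℂ)), ?_, ?_⟩
      · rw [complexify_norm, hw]
      · rw [inner_clm_eq_dot, ← dot_complexify A (fun i => w i)]
        rfl
    have hle : ⟪w, toEuclideanCLM (𝕜 := ℝ) A w⟫ ≤ logNorm A :=
      le_csSup (logNorm_bddAbove A) hmem
    have hscale : ⟪x, toEuclideanCLM (𝕜 := ℝ) A x⟫
        = ‖x‖ ^ 2 * ⟪w, toEuclideanCLM (𝕜 := ℝ) A w⟫ := by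
      rw [hw_def, ContinuousLinearMap.map_smul, real_inner_smul_left, real_inner_smul_right]
      field_simp
    rw [hscale]
    calc ‖x‖ ^ 2 * ⟪w, toEuclideanCLM (𝕜 := ℝ) A w⟫ ≤ ‖x‖ ^ 2 * logNorm A :=
          mul_le_mul_of_nonneg_left hle (by positivity)
    _ = logNorm A * ‖x‖ ^ 2 := by ring

end LogNorm

section OpNorm

variable {N : ℕ}

lemma toEuclideanCLM_exp (X : Matrix (Fin N) (Fin N) ℝ) (σ : ℝ) :
    Matrix.toEuclideanCLM (𝕜 := ℝ) (NormedSpace.exp (σ • X)) =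
      NormedSpace.exp (σ • Matrix.toEuclideanCLM (𝕜 := ℝ) X) := by
  have hc : Continuous (⇑(toEuclideanCLM (𝕜 := ℝ) (n := Fin N))) := by
    have : ⇑(toEuclideanCLM (𝕜 := ℝ) (n := Fin N)) =
        ⇑({ toFun := ⇑(toEuclideanCLM (𝕜 := ℝ) (n := Fin N)),
            map_add' := by simp,
            map_smul' := by simp } :
          Matrix (Fin N) (Fin N) ℝ →ₗ[ℝ]
            (EuclideanSpace ℝ (Fin N) →L[ℝ] EuclideanSpace ℝ (Fin N))) := rfl
    rw [this]; exact LinearMap.continuous_of_finiteDimensional _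
  rw [← _root_.map_smul (toEuclideanCLM (𝕜 := ℝ) (n := Fin N))]
  exact NormedSpace.map_exp_of_mem_ball (𝕂 := ℝ) (toEuclideanCLM (𝕜 := ℝ) (n := Fin N)) hc _
    (by rw [NormedSpace.expSeries_radius_eq_top]; simp)

lemma opnorm_exp_le (X : Matrix (Fin N) (Fin N) ℝ) (c : ℝ)
    (hX : ∀ x : EuclideanSpace ℝ (Fin N), ⟪x, toEuclideanCLM (𝕜 := ℝ) X x⟫ ≤ c * ‖x‖ ^ 2)
    {σ : ℝ} (hσ : 0 ≤ σ) : ‖NormedSpace.exp (σ • X)‖ ≤ Real.exp (σ * c) := by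
  have h0 : ‖NormedSpace.exp (σ • X)‖
      = ‖toEuclideanCLM (𝕜 := ℝ) (NormedSpace.exp (σ • X))‖ := rfl
  rw [h0, toEuclideanCLM_exp]
  exact ContinuousLinearMap.opNorm_le_bound _ (Real.exp_pos _).le
    (fun x => exp_apply_norm_le _ c hX hσ x)

lemma norm_one_matrix_le : ‖(1 : Matrix (Fin N) (Fin N) ℝ)‖ ≤ 1 := by
  have h0 : ‖(1 : Matrix (Fin N) (Fin N) ℝ)‖
      = ‖toEuclideanCLM (𝕜 := ℝ) (1 : Matrix (Fin N) (Fin N) ℝ)‖ := rfl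
  rw [h0, _root_.map_one, ContinuousLinearMap.one_def]
  exact ContinuousLinearMap.norm_id_le

lemma norm_pow_le₀ (X : Matrix (Fin N) (Fin N) ℝ) (j : ℕ) : ‖X ^ j‖ ≤ ‖X‖ ^ j := by
  cases j with
  | zero => simpa using norm_one_matrix_le
  | succ j => exact norm_pow_le' X (Nat.succ_pos j)

end OpNorm

section Taylor

variable {N : ℕ}

lemma exp_taylor_remainder (X : Matrix (Fin N) (Fin N) ℝ) (c : ℝ)
    (hX : ∀ σ : ℝ, 0 ≤ σ → ‖NormedSpace.exp (σ • X)‖ ≤ Real.exp (σ * c))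
    (q : ℕ) {τ : ℝ} (hτ : 0 ≤ τ) :
    ‖NormedSpace.exp (τ • X) - ∑ i ∈ Finset.range (q + 1), (τ ^ i / i.factorial) • X ^ i‖ ≤
      max 1 (Real.exp (τ * c)) * (τ ^ (q + 1) * ‖X‖ ^ (q + 1) / (q + 1).factorial) := by
  set M : ℝ := max 1 (Real.exp (τ * c)) with hM
  have hEbd : ∀ σ ∈ Set.Ioc 0 τ, ‖NormedSpace.exp ((τ - σ) • X)‖ ≤ M := by
    intro σ hσ
    have h0 : (0:ℝ) ≤ τ - σ := by linarith [hσ.2]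
    refine le_trans (hX _ h0) ?_
    rcases le_or_gt 0 c with hc | hc
    · exact le_max_of_le_right (Real.exp_le_exp.mpr (by nlinarith [hσ.1]))
    · exact le_max_of_le_left
        (by rw [← Real.exp_zero]; exact Real.exp_le_exp.mpr (by nlinarith [hσ.1]))
  set P : ℝ → Matrix (Fin N) (Fin N) ℝ :=
    fun σ => ∑ i ∈ Finset.range (q + 1), (σ ^ i / i.factorial) • X ^ i with hP
  set G : ℝ → Matrix (Fin N) (Fin N) ℝ :=
    fun σ => NormedSpace.exp ((τ - σ) • X) * P σ with hG_def
  set G' : ℝ → Matrix (Fin N) (Fin N) ℝ := fun σ =>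
    -((σ ^ q / q.factorial) • (NormedSpace.exp ((τ - σ) • X) * X ^ (q + 1))) with hG'd
  have hcomm : ∀ σ : ℝ, X * NormedSpace.exp ((τ - σ) • X)
      = NormedSpace.exp ((τ - σ) • X) * X := fun σ =>
    (((Commute.refl X).smul_right (τ - σ)).exp_right).eq
  have hG : ∀ σ : ℝ, HasDerivAt G (G' σ) σ := by
    intro σ
    have h1 : HasDerivAt (fun σ : ℝ => NormedSpace.exp ((τ - σ) • X))
        (-(X * NormedSpace.exp ((τ - σ) • X))) σ := by
      have houter := hasDerivAt_exp_smul_const' (𝕂 := ℝ) X (τ - σ)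
      have hinner : HasDerivAt (fun σ : ℝ => τ - σ) (-1) σ := by
        simpa using (hasDerivAt_id σ).const_sub τ
      have := houter.scomp σ hinner
      refine this.congr_deriv ?_; simp
    have h2 : HasDerivAt P (∑ i ∈ Finset.range (q + 1),
        ((i * σ ^ (i - 1)) / i.factorial) • X ^ i) σ := by
      refine HasDerivAt.fun_sum fun i _ => ?_
      simpa [div_eq_mul_inv, mul_comm, mul_assoc, mul_left_comm] using
        (((hasDerivAt_pow i σ).div_const (i.factorial : ℝ)).smul_const (X ^ i))
    have h3 : (∑ i ∈ Finset.range (q + 1), ((i * σ ^ (i - 1)) / i.factorial) • X ^ i)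
        = X * ∑ i ∈ Finset.range q, (σ ^ i / i.factorial) • X ^ i := by
      rw [Finset.sum_range_succ']
      simp only [Nat.cast_zero, zero_mul, Nat.factorial_zero, Nat.cast_one, zero_div, zero_smul,
        add_zero]
      rw [Finset.mul_sum]
      refine Finset.sum_congr rfl fun i _ => ?_
      have : ((i:ℝ) + 1) * σ ^ i / (i + 1).factorial = σ ^ i / i.factorial := by
        rw [Nat.factorial_succ]
        push_cast
        field_simp
      simp only [Nat.add_sub_cancel, Nat.cast_add, Nat.cast_one, this]
      rw [mul_smul_comm, pow_succ']
    have h4 := h1.mul h2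
    rw [h3] at h4
    refine h4.congr_deriv ?_
    have h5 : P σ = (∑ i ∈ Finset.range q, (σ ^ i / i.factorial) • X ^ i)
        + (σ ^ q / q.factorial) • X ^ q := by
      simp only [hP, Finset.sum_range_succ]
    set Q := ∑ i ∈ Finset.range q, (σ ^ i / i.factorial) • X ^ i
    have h6 : NormedSpace.exp ((τ - σ) • X) * (X * Q)
        = (X * NormedSpace.exp ((τ - σ) • X)) * Q := by
      rw [hcomm, mul_assoc]
    have hEXq : X * NormedSpace.exp ((τ - σ) • X) * X ^ q
        = NormedSpace.exp ((τ - σ) • X) * X ^ (q + 1) := by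
      rw [hcomm, mul_assoc, ← pow_succ']
    simp only [hG'd, h5, h6, mul_add, mul_smul_comm, neg_mul, hEXq, smul_neg]
    abel
  have hcont : Continuous G' := by
    rw [hG'd]
    refine Continuous.neg (Continuous.smul (by fun_prop : Continuous fun σ : ℝ => σ ^ q / (q.factorial : ℝ)) ?_)
    exact ((continuous_iff_continuousAt.2 fun x =>
      (NormedSpace.exp_analytic (𝕂 := ℝ) x).continuousAt).comp (by fun_prop)).mul continuous_const
  have hFTC := intervalIntegral.integral_eq_sub_of_hasDerivAt
      (f := G) (f' := G') (fun σ _ => hG σ) (hcont.intervalIntegrable 0 τ)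
  have hGτ : G τ = P τ := by
    simp [hG_def, sub_self, NormedSpace.exp_zero]
  have hG0 : G 0 = NormedSpace.exp (τ • X) := by
    have hP0 : P 0 = 1 := by
      show (∑ i ∈ Finset.range (q + 1), ((0:ℝ) ^ i / (i.factorial : ℝ)) • X ^ i) = 1
      rw [Finset.sum_eq_single 0]
      · simp
      · intro i _ hi
        simp [zero_pow hi]
      · simp
    simp [hG_def, hP0]
  have key : NormedSpace.exp (τ • X) - P τ
      = ∫ σ in (0:ℝ)..τ, (σ ^ q / q.factorial) •
          (NormedSpace.exp ((τ - σ) • X) * X ^ (q + 1)) := by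
    rw [hGτ, hG0] at hFTC
    have h8 : NormedSpace.exp (τ • X) - P τ = -(P τ - NormedSpace.exp (τ • X)) := by abel
    rw [h8, ← hFTC, ← intervalIntegral.integral_neg]
    refine intervalIntegral.integral_congr fun σ _ => ?_
    simp [hG'd]
  have hPτ : (∑ i ∈ Finset.range (q + 1), (τ ^ i / (i.factorial : ℝ)) • X ^ i) = P τ := rfl
  rw [hPτ, key]
  have hM0 : (0:ℝ) ≤ M := le_trans zero_le_one (le_max_left _ _)
  have hbd : ∀ᵐ σ : ℝ ∂MeasureTheory.volume.restrict (Set.uIoc (0:ℝ) τ),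
      ‖(σ ^ q / q.factorial) • (NormedSpace.exp ((τ - σ) • X) * X ^ (q + 1))‖
        ≤ (M * ‖X‖ ^ (q + 1) / q.factorial) * σ ^ q := by
    rw [Set.uIoc_of_le hτ]
    refine (MeasureTheory.ae_restrict_iff' measurableSet_Ioc).mpr
      (Filter.Eventually.of_forall fun σ hσ => ?_)
    rw [norm_smul, Real.norm_eq_abs, abs_div, abs_of_pos (pow_pos hσ.1 q),
      Nat.abs_cast]
    have h9 : ‖NormedSpace.exp ((τ - σ) • X) * X ^ (q + 1)‖ ≤ M * ‖X‖ ^ (q + 1) := by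
      refine le_trans (norm_mul_le _ _) ?_
      exact mul_le_mul (hEbd σ hσ) (norm_pow_le' X (Nat.succ_pos q)) (norm_nonneg _) hM0
    calc σ ^ q / q.factorial * ‖NormedSpace.exp ((τ - σ) • X) * X ^ (q + 1)‖
        ≤ σ ^ q / q.factorial * (M * ‖X‖ ^ (q + 1)) := by
          exact mul_le_mul_of_nonneg_left h9
            (div_nonneg (pow_nonneg hσ.1.le q) (Nat.cast_nonneg _))
      _ = (M * ‖X‖ ^ (q + 1) / q.factorial) * σ ^ q := by ring
  have hgint : IntervalIntegrable
      (fun σ => (M * ‖X‖ ^ (q + 1) / q.factorial) * σ ^ q) MeasureTheory.volume 0 τ :=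
    (Continuous.intervalIntegrable (by fun_prop) 0 τ)
  refine le_trans (intervalIntegral.norm_integral_le_of_norm_le hτ
    ((MeasureTheory.ae_restrict_iff' measurableSet_Ioc).mp (by rwa [Set.uIoc_of_le hτ] at hbd))
    hgint) ?_
  rw [intervalIntegral.integral_const_mul, integral_pow,
    zero_pow (Nat.succ_ne_zero q), sub_zero]
  rw [Nat.factorial_succ]
  push_cast
  have hq1 : (0:ℝ) < (q:ℝ) + 1 := by positivity
  have hqf : (0:ℝ) < (q.factorial : ℝ) := by exact_mod_cast q.factorial_pos
  field_simp
  ring_nf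
  exact le_refl _

end Taylor

section LinAlg
variable {n ℓ m : ℕ} (A : Matrix (Fin n) (Fin n) ℝ) (B : Matrix (Fin n) (Fin ℓ) ℝ) (k : ℕ)
  (V : Matrix (Fin n) (Fin m) ℝ)

lemma fix_of_mem (hV : Vᵀ * V = 1) : ∀ v ∈ colSpace V, (V * Vᵀ) *ᵥ v = v := by
  intro v hv
  refine Submodule.span_induction ?_ ?_ ?_ ?_ hv
  · rintro x ⟨l, rfl⟩
    have h1 : Vᵀ l = V *ᵥ Pi.single l 1 := by
      ext i
      simp [Matrix.mulVec_single, Matrix.transpose_apply]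
    rw [h1, Matrix.mulVec_mulVec, Matrix.mul_assoc, hV, Matrix.mul_one]
  · simp
  · intro x y _ _ hx hy; rw [Matrix.mulVec_add, hx, hy]
  · intro a x _ hx; rw [Matrix.mulVec_smul, hx]

lemma proj_fix (hV : Vᵀ * V = 1) (hspan : blockKrylov A B k ≤ colSpace V)
    {i : ℕ} (hi : i < k) : V * (Vᵀ * (A ^ i * B)) = A ^ i * B := by
  have hcol : ∀ j, ((A ^ i * B)ᵀ) j ∈ colSpace V := fun j =>
    hspan (Submodule.subset_span ⟨i, hi, j, rfl⟩)
  ext r j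
  have h2 := congrFun (fix_of_mem V hV _ (hcol j)) r
  calc (V * (Vᵀ * (A ^ i * B))) r j = ((V * Vᵀ) *ᵥ ((A ^ i * B)ᵀ j)) r := by
        rw [← Matrix.mul_assoc]
        simp [Matrix.mul_apply, Matrix.mulVec, dotProduct, Matrix.transpose_apply]
  _ = (A ^ i * B) r j := h2

lemma exact_krylov (hV : Vᵀ * V = 1) (hspan : blockKrylov A B k ≤ colSpace V) :
    ∀ i j, i + j ≤ k →
      (Vᵀ * A * V) ^ i * (Vᵀ * (A ^ j * B)) = Vᵀ * (A ^ (i + j) * B) := by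
  intro i
  induction i with
  | zero => intro j _; simp
  | succ i ih =>
    intro j hij
    have h1 : i + j < k := by omega
    rw [pow_succ', Matrix.mul_assoc, ih j (by omega)]
    rw [show Vᵀ * A * V * (Vᵀ * (A ^ (i + j) * B)) = Vᵀ * (A * (V * (Vᵀ * (A ^ (i+j) * B))))
      from by simp only [Matrix.mul_assoc]]
    rw [proj_fix A B k V hV hspan h1]
    rw [show (i + 1) + j = (i + j) + 1 from by omega, pow_succ']
    simp only [Matrix.mul_assoc]

end LinAlg

lemma double_sum_identity {M : Type*} [AddCommGroup M] [Module ℝ M]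
    (f : ℕ → M) (t s : ℝ) (k : ℕ) :
    ∑ p ∈ Finset.range k, ((t + s) ^ p / p.factorial) • f p
      = ∑ j ∈ Finset.range k, ∑ i ∈ Finset.range (k - j),
          ((t ^ i * s ^ j) / (i.factorial * j.factorial)) • f (i + j) := by
  induction k with
  | zero => simp
  | succ k ih =>
    rw [Finset.sum_range_succ, ih]
    have hsplit : ∀ j ∈ Finset.range (k+1),
        (∑ i ∈ Finset.range (k + 1 - j),
            ((t ^ i * s ^ j) / (i.factorial * j.factorial)) • f (i + j))
        = (∑ i ∈ Finset.range (k - j), ((t ^ i * s ^ j) / (i.factorial * j.factorial)) • f (i + j))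
          + ((t ^ (k - j) * s ^ j) / ((k - j).factorial * j.factorial)) • f ((k - j) + j) := by
      intro j hj
      rw [Finset.mem_range] at hj
      rw [show k + 1 - j = (k - j) + 1 from by omega, Finset.sum_range_succ]
    rw [Finset.sum_congr rfl hsplit, Finset.sum_add_distrib]
    congr 1
    · rw [Finset.sum_range_succ]
      simp
    · have hfk : ∀ j ∈ Finset.range (k+1),
          ((t ^ (k - j) * s ^ j) / ((k - j).factorial * j.factorial)) • f ((k - j) + j)
          = ((t ^ (k - j) * s ^ j) / ((k - j).factorial * j.factorial)) • f k := by
        intro j hj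
        rw [Finset.mem_range] at hj
        rw [show (k - j) + j = k from by omega]
      rw [Finset.sum_congr rfl hfk, ← Finset.sum_smul]
      congr 1
      have hbin : (s + t) ^ k = ∑ j ∈ Finset.range (k + 1),
          s ^ j * t ^ (k - j) * (k.choose j) := add_pow s t k
      have hc : ∀ j ∈ Finset.range (k+1),
          t ^ (k - j) * s ^ j / ((k - j).factorial * j.factorial)
          = s ^ j * t ^ (k - j) * (k.choose j) / k.factorial := by
        intro j hj
        rw [Finset.mem_range] at hj
        have hjk : j ≤ k := by omega
        have := Nat.choose_mul_factorial_mul_factorial hjk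
        have hcast : (k.choose j : ℝ) * j.factorial * (k - j).factorial = k.factorial := by
          exact_mod_cast congrArg (Nat.cast (R := ℝ)) this
        have h1 : (0:ℝ) < j.factorial := by exact_mod_cast j.factorial_pos
        have h2 : (0:ℝ) < (k - j).factorial := by exact_mod_cast (k - j).factorial_pos
        have h3 : (0:ℝ) < k.factorial := by exact_mod_cast k.factorial_pos
        field_simp
        rw [← hcast]
        ring
      rw [Finset.sum_congr rfl hc, ← Finset.sum_div]
      rw [← hbin]
      rw [show s + t = t + s from by ring]

/-- partial binomial sum bound -/
lemma partial_binomial_le (t s : ℝ) (ht : 0 ≤ t) (hs : 0 ≤ s) (k : ℕ) :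
    ∑ j ∈ Finset.range k, s ^ j * t ^ (k - j) / (j.factorial * (k - j).factorial)
      ≤ (t + s) ^ k / k.factorial := by
  have hfull := double_sum_identity (M := ℝ) (fun _ => 1) t s (k + 1)
  -- instead: directly reprove via add_pow
  have hbin : (s + t) ^ k = ∑ j ∈ Finset.range (k + 1),
      s ^ j * t ^ (k - j) * (k.choose j) := add_pow s t k
  have heq : (t + s) ^ k / k.factorial
      = ∑ j ∈ Finset.range (k + 1), s ^ j * t ^ (k - j) / (j.factorial * (k - j).factorial) := by
    rw [show t + s = s + t from by ring, hbin, Finset.sum_div]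
    refine Finset.sum_congr rfl fun j hj => ?_
    rw [Finset.mem_range] at hj
    have hjk : j ≤ k := by omega
    have := Nat.choose_mul_factorial_mul_factorial hjk
    have hcast : (k.choose j : ℝ) * j.factorial * (k - j).factorial = k.factorial := by
      exact_mod_cast congrArg (Nat.cast (R := ℝ)) this
    have h1 : (0:ℝ) < j.factorial := by exact_mod_cast j.factorial_pos
    have h2 : (0:ℝ) < (k - j).factorial := by exact_mod_cast (k - j).factorial_pos
    have h3 : (0:ℝ) < k.factorial := by exact_mod_cast k.factorial_pos
    field_simp
    rw [← hcast]
    ring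
  rw [heq, Finset.sum_range_succ]
  have hterm : (0:ℝ) ≤ s ^ k * t ^ (k - k) / (k.factorial * (k - k).factorial) := by positivity
  linarith

set_option maxHeartbeats 1600000

/-- Lemma A.2: if the column space of `V_k` contains `K_k(A,B)` and
`H_k = V_kᵀ A V_k`, then for all `t, s > 0`,
`‖(e^{tA} − V_k e^{tH_k} V_kᵀ) e^{sA} B‖ ≤ 4 max{1, e^{(t+s)μ(A)}} ‖(t+s)A‖^k/k! ‖B‖`. -/
theorem krylov_exp_shifted_error {n ℓ m : ℕ} (A : Matrix (Fin n) (Fin n) ℝ)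
    (B : Matrix (Fin n) (Fin ℓ) ℝ) (k : ℕ)
    (V : Matrix (Fin n) (Fin m) ℝ) (hV : Vᵀ * V = 1)
    (hspan : blockKrylov A B k ≤ colSpace V) :
    ∀ t s : ℝ, 0 < t → 0 < s →
      ‖(mexp (t • A) - V * mexp (t • (Vᵀ * A * V)) * Vᵀ) * (mexp (s • A) * B)‖ ≤
        4 * max 1 (Real.exp ((t + s) * logNorm A)) *
          (‖(t + s) • A‖ ^ k / (Nat.factorial k : ℝ)) * ‖B‖ := by
  intro t s ht hs
  set H : Matrix (Fin m) (Fin m) ℝ := Vᵀ * A * V with hH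
  set c : ℝ := logNorm A with hc
  have ht0 : (0:ℝ) ≤ t := ht.le
  have hs0 : (0:ℝ) ≤ s := hs.le
  have hts0 : (0:ℝ) ≤ t + s := by linarith
  -- quadratic bounds
  have hAquad : ∀ x : EuclideanSpace ℝ (Fin n),
      ⟪x, toEuclideanCLM (𝕜 := ℝ) A x⟫ ≤ c * ‖x‖ ^ 2 := fun x => inner_le_logNorm A x
  have hHquad : ∀ x : EuclideanSpace ℝ (Fin m),
      ⟪x, toEuclideanCLM (𝕜 := ℝ) H x⟫ ≤ c * ‖x‖ ^ 2 := by
    intro x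
    have h1 := inner_clm_eq_dot H x
    have h2 : dotProduct (fun i => x i) (H *ᵥ (fun i => x i))
        = dotProduct (V *ᵥ (fun i => x i)) (A *ᵥ (V *ᵥ (fun i => x i))) := by
      rw [hH, ← Matrix.mulVec_mulVec, ← Matrix.mulVec_mulVec,
        dotProduct_mulVec _ Vᵀ _, Matrix.vecMul_transpose]
    set z : EuclideanSpace ℝ (Fin n) :=
      (EuclideanSpace.equiv (Fin n) ℝ).symm (V *ᵥ (fun i => x i)) with hz
    have h3 : ⟪z, toEuclideanCLM (𝕜 := ℝ) A z⟫
        = dotProduct (V *ᵥ (fun i => x i)) (A *ᵥ (V *ᵥ (fun i => x i))) :=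
      inner_clm_eq_dot A z
    have h4 : ‖z‖ ^ 2 = ‖x‖ ^ 2 := by
      rw [← real_inner_self_eq_norm_sq, ← real_inner_self_eq_norm_sq]
      rw [dot_eq_inner z z, dot_eq_inner x x]
      show dotProduct (V *ᵥ (fun i => x i)) (V *ᵥ (fun i => x i))
        = dotProduct (fun i => x i) (fun i => x i)
      rw [dotProduct_mulVec, ← Matrix.mulVec_transpose, Matrix.mulVec_mulVec, hV,
        Matrix.one_mulVec]
    rw [h1, h2, ← h3]
    rw [← h4]
    exact hAquad z
  -- operator norm bounds for the exponentials
  have hAexp : ∀ σ : ℝ, 0 ≤ σ → ‖NormedSpace.exp (σ • A)‖ ≤ Real.exp (σ * c) :=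
    fun σ hσ => opnorm_exp_le A c hAquad hσ
  have hHexp : ∀ σ : ℝ, 0 ≤ σ → ‖NormedSpace.exp (σ • H)‖ ≤ Real.exp (σ * c) :=
    fun σ hσ => opnorm_exp_le H c hHquad hσ
  set Mx : ℝ := max 1 (Real.exp ((t + s) * c)) with hMx
  have hM1 : (1:ℝ) ≤ Mx := le_max_left _ _
  have hM0 : (0:ℝ) ≤ Mx := by linarith
  have hexp_le : ∀ a : ℝ, 0 ≤ a → a ≤ t + s → Real.exp (a * c) ≤ Mx := by
    intro a h1 h2
    rcases le_or_gt 0 c with hc0 | hc0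
    · exact le_max_of_le_right (Real.exp_le_exp.mpr (by nlinarith))
    · exact le_max_of_le_left
        (by rw [← Real.exp_zero]; exact Real.exp_le_exp.mpr (by nlinarith))
  -- norms of V
  have hVt : Vᴴ = Vᵀ := by
    ext i j; simp [Matrix.conjTranspose_apply]
  have hVnorm : ‖V‖ ≤ 1 := by
    have h1 := Matrix.l2_opNorm_conjTranspose_mul_self V
    rw [hVt, hV] at h1
    have h2 : ‖(1 : Matrix (Fin m) (Fin m) ℝ)‖ ≤ 1 := norm_one_matrix_le
    nlinarith [norm_nonneg V]
  have hVtnorm : ‖Vᵀ‖ ≤ 1 := by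
    rw [← hVt, Matrix.l2_opNorm_conjTranspose]; exact hVnorm
  have hA0 : (0:ℝ) ≤ ‖A‖ := norm_nonneg A
  have hHnormA : ‖H‖ ≤ ‖A‖ := by
    rw [hH]
    calc ‖Vᵀ * A * V‖ ≤ ‖Vᵀ * A‖ * ‖V‖ := Matrix.l2_opNorm_mul _ _
    _ ≤ (‖Vᵀ‖ * ‖A‖) * ‖V‖ :=
        mul_le_mul_of_nonneg_right (Matrix.l2_opNorm_mul _ _) (norm_nonneg _)
    _ ≤ (1 * ‖A‖) * 1 := by
        have h1 : ‖Vᵀ‖ * ‖A‖ ≤ 1 * ‖A‖ := mul_le_mul_of_nonneg_right hVtnorm hA0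
        have h2 : (0:ℝ) ≤ ‖Vᵀ‖ * ‖A‖ := mul_nonneg (norm_nonneg _) hA0
        nlinarith [norm_nonneg V]
    _ = ‖A‖ := by ring
  have hVEV : ‖V * mexp (t • H) * Vᵀ‖ ≤ Real.exp (t * c) := by
    calc ‖V * mexp (t • H) * Vᵀ‖ ≤ ‖V * mexp (t • H)‖ * ‖Vᵀ‖ := Matrix.l2_opNorm_mul _ _
    _ ≤ (‖V‖ * ‖mexp (t • H)‖) * ‖Vᵀ‖ :=
        mul_le_mul_of_nonneg_right (Matrix.l2_opNorm_mul _ _) (norm_nonneg _)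
    _ ≤ (1 * Real.exp (t * c)) * 1 := by
        have he := hHexp t ht0
        have h2 : ‖V‖ * ‖mexp (t • H)‖ ≤ 1 * Real.exp (t * c) :=
          mul_le_mul hVnorm he (norm_nonneg _) zero_le_one
        have h3 : (0:ℝ) ≤ ‖V‖ * ‖mexp (t • H)‖ := mul_nonneg (norm_nonneg _) (norm_nonneg _)
        nlinarith [Real.exp_pos (t * c), norm_nonneg Vᵀ]
    _ = Real.exp (t * c) := by ring
  -- the norm of (t+s) • A
  have hsmulnorm : ‖(t + s) • A‖ ^ k = (t + s) ^ k * ‖A‖ ^ k := by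
    rw [norm_smul, Real.norm_eq_abs, abs_of_nonneg hts0, mul_pow]
  rcases Nat.eq_zero_or_pos k with hk0 | hkpos
  · -- trivial case k = 0
    subst hk0
    simp only [pow_zero, Nat.factorial_zero, Nat.cast_one]
    have h1 : ‖(mexp (t • A) - V * mexp (t • H) * Vᵀ) * (mexp (s • A) * B)‖
        ≤ (‖mexp (t • A)‖ + ‖V * mexp (t • H) * Vᵀ‖) * (‖mexp (s • A)‖ * ‖B‖) := by
      calc ‖(mexp (t • A) - V * mexp (t • H) * Vᵀ) * (mexp (s • A) * B)‖
          ≤ ‖mexp (t • A) - V * mexp (t • H) * Vᵀ‖ * ‖mexp (s • A) * B‖ :=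
            Matrix.l2_opNorm_mul _ _
      _ ≤ (‖mexp (t • A)‖ + ‖V * mexp (t • H) * Vᵀ‖) * ‖mexp (s • A) * B‖ :=
            mul_le_mul_of_nonneg_right (norm_sub_le _ _) (norm_nonneg _)
      _ ≤ (‖mexp (t • A)‖ + ‖V * mexp (t • H) * Vᵀ‖) * (‖mexp (s • A)‖ * ‖B‖) :=
            mul_le_mul_of_nonneg_left (Matrix.l2_opNorm_mul _ _)
              (by positivity)
    have h2 : ‖mexp (t • A)‖ ≤ Real.exp (t * c) := hAexp t ht0
    have h3 : ‖mexp (s • A)‖ ≤ Real.exp (s * c) := hAexp s hs0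
    have h4 : Real.exp (t * c) * Real.exp (s * c) = Real.exp ((t + s) * c) := by
      rw [← Real.exp_add]; ring_nf
    have h5 : Real.exp ((t + s) * c) ≤ Mx := le_max_right _ _
    have hB0 : (0:ℝ) ≤ ‖B‖ := norm_nonneg B
    have h6 : (‖mexp (t • A)‖ + ‖V * mexp (t • H) * Vᵀ‖) * (‖mexp (s • A)‖ * ‖B‖)
        ≤ (2 * Real.exp (t * c)) * (Real.exp (s * c) * ‖B‖) := by
      have := Real.exp_pos (s * c)
      have := Real.exp_pos (t * c)
      have h7 : ‖mexp (s • A)‖ * ‖B‖ ≤ Real.exp (s * c) * ‖B‖ :=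
        mul_le_mul_of_nonneg_right h3 hB0
      have h8 : ‖mexp (t • A)‖ + ‖V * mexp (t • H) * Vᵀ‖ ≤ 2 * Real.exp (t * c) := by
        linarith
      exact mul_le_mul h8 h7 (by positivity) (by positivity)
    have h9 : (2 * Real.exp (t * c)) * (Real.exp (s * c) * ‖B‖) ≤ 2 * Mx * ‖B‖ := by
      have : Real.exp (t * c) * Real.exp (s * c) ≤ Mx := by rw [h4]; exact h5
      nlinarith [Real.exp_pos (t*c), Real.exp_pos (s*c), hB0]
    calc ‖(mexp (t • A) - V * mexp (t • H) * Vᵀ) * (mexp (s • A) * B)‖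
        ≤ 2 * Mx * ‖B‖ := by linarith
    _ ≤ 4 * Mx * (1 / 1) * ‖B‖ := by
        rw [div_one]
        nlinarith [norm_nonneg B]
  · -- main case k ≥ 1
    obtain ⟨k', rfl⟩ : ∃ k', k = k' + 1 := ⟨k - 1, by omega⟩
    set k : ℕ := k' + 1 with hkdef
    set W : ℕ → Matrix (Fin m) (Fin ℓ) ℝ := fun j => Vᵀ * (A ^ j * B) with hW
    set PA : ℝ → Matrix (Fin n) (Fin n) ℝ :=
      fun τ' => ∑ i ∈ Finset.range k, (τ' ^ i / i.factorial) • A ^ i with hPA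
    set PH : ℕ → Matrix (Fin m) (Fin m) ℝ :=
      fun p => ∑ i ∈ Finset.range p, (t ^ i / i.factorial) • H ^ i with hPH
    -- the exponential sum identity
    have hexp_sum : mexp (t • A) * mexp (s • A) = mexp ((t + s) • A) := by
      rw [mexp, mexp, mexp, add_smul]
      exact (Matrix.exp_add_of_commute _ _
        (((Commute.refl A).smul_left t).smul_right s)).symm
    -- star identity
    have hstar : PA (t + s) * B = ∑ j ∈ Finset.range k,
        (s ^ j / j.factorial) • (V * (PH (k - j) * W j)) := by
      have hL : PA (t + s) * B
          = ∑ p ∈ Finset.range k, ((t + s) ^ p / p.factorial) • (A ^ p * B) := by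
        simp only [hPA]
        rw [Matrix.sum_mul]
        exact Finset.sum_congr rfl fun p _ => Matrix.smul_mul _ _ _
      have hR : ∀ j ∈ Finset.range k, (s ^ j / j.factorial) • (V * (PH (k - j) * W j))
          = ∑ i ∈ Finset.range (k - j),
              ((t ^ i * s ^ j) / (i.factorial * j.factorial)) • (A ^ (i + j) * B) := by
        intro j hj
        rw [Finset.mem_range] at hj
        have h1 : PH (k - j) * W j = ∑ i ∈ Finset.range (k - j),
            (t ^ i / i.factorial) • (Vᵀ * (A ^ (i + j) * B)) := by
          simp only [hPH]
          rw [Matrix.sum_mul]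
          refine Finset.sum_congr rfl fun i hi => ?_
          rw [Finset.mem_range] at hi
          rw [Matrix.smul_mul, hW]
          congr 1
          exact exact_krylov A B k V hV hspan i j (by omega)
        rw [h1, Matrix.mul_sum, Finset.smul_sum]
        refine Finset.sum_congr rfl fun i hi => ?_
        rw [Finset.mem_range] at hi
        rw [Matrix.mul_smul, proj_fix A B k V hV hspan (show i + j < k from by omega),
          smul_smul]
        congr 1
        field_simp
      rw [hL, Finset.sum_congr rfl hR]
      exact double_sum_identity (fun p => A ^ p * B) t s k
    -- h6 : middle identity
    have h6 : (V * mexp (t • H) * Vᵀ) * (PA s * B)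
        = ∑ j ∈ Finset.range k, (s ^ j / j.factorial) • (V * (mexp (t • H) * W j)) := by
      have h1 : PA s * B = ∑ j ∈ Finset.range k, (s ^ j / j.factorial) • (A ^ j * B) := by
        simp only [hPA]
        rw [Matrix.sum_mul]
        exact Finset.sum_congr rfl fun p _ => Matrix.smul_mul _ _ _
      rw [h1, Matrix.mul_sum]
      refine Finset.sum_congr rfl fun j _ => ?_
      rw [Matrix.mul_smul]
      congr 1
      rw [hW]
      simp only [Matrix.mul_assoc]
    -- decomposition
    have hKey : (mexp (t • A) - V * mexp (t • H) * Vᵀ) * (mexp (s • A) * B)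
        = (mexp ((t + s) • A) - PA (t + s)) * B
          - (V * mexp (t • H) * Vᵀ) * ((mexp (s • A) - PA s) * B)
          - ∑ j ∈ Finset.range k,
              (s ^ j / j.factorial) • (V * ((mexp (t • H) - PH (k - j)) * W j)) := by
      have hT3 : ∑ j ∈ Finset.range k,
            (s ^ j / j.factorial) • (V * ((mexp (t • H) - PH (k - j)) * W j))
          = (∑ j ∈ Finset.range k, (s ^ j / j.factorial) • (V * (mexp (t • H) * W j)))
            - ∑ j ∈ Finset.range k, (s ^ j / j.factorial) • (V * (PH (k - j) * W j)) := by
        rw [← Finset.sum_sub_distrib]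
        refine Finset.sum_congr rfl fun j _ => ?_
        rw [Matrix.sub_mul, Matrix.mul_sub, smul_sub]
      rw [hT3]
      simp only [Matrix.sub_mul, Matrix.mul_sub]
      rw [h6, ← hstar, ← Matrix.mul_assoc, hexp_sum]
      abel
    rw [hKey]
    -- bounds
    have hB0 : (0:ℝ) ≤ ‖B‖ := norm_nonneg B
    have hkf : (0:ℝ) < (k.factorial : ℝ) := by exact_mod_cast k.factorial_pos
    set T : ℝ := Mx * ((t + s) ^ k * ‖A‖ ^ k / k.factorial) * ‖B‖ with hT
    have hT0 : 0 ≤ T := by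
      rw [hT]
      have : (0:ℝ) ≤ (t + s) ^ k * ‖A‖ ^ k / k.factorial := by positivity
      positivity
    -- term 1
    have hterm1 : ‖(mexp ((t + s) • A) - PA (t + s)) * B‖ ≤ T := by
      have h1 := exp_taylor_remainder A c hAexp k' hts0
      have h2 : ‖(mexp ((t + s) • A) - PA (t + s)) * B‖
          ≤ ‖mexp ((t + s) • A) - PA (t + s)‖ * ‖B‖ := Matrix.l2_opNorm_mul _ _
      refine le_trans h2 ?_
      rw [hT]
      exact mul_le_mul_of_nonneg_right h1 hB0
    -- term 2
    have hterm2 : ‖(V * mexp (t • H) * Vᵀ) * ((mexp (s • A) - PA s) * B)‖ ≤ T := by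
      have h1 := exp_taylor_remainder A c hAexp k' hs0
      have h2 : ‖(V * mexp (t • H) * Vᵀ) * ((mexp (s • A) - PA s) * B)‖
          ≤ ‖V * mexp (t • H) * Vᵀ‖ * (‖mexp (s • A) - PA s‖ * ‖B‖) := by
        calc ‖(V * mexp (t • H) * Vᵀ) * ((mexp (s • A) - PA s) * B)‖
            ≤ ‖V * mexp (t • H) * Vᵀ‖ * ‖(mexp (s • A) - PA s) * B‖ :=
              Matrix.l2_opNorm_mul _ _
        _ ≤ ‖V * mexp (t • H) * Vᵀ‖ * (‖mexp (s • A) - PA s‖ * ‖B‖) :=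
              mul_le_mul_of_nonneg_left (Matrix.l2_opNorm_mul _ _) (norm_nonneg _)
      refine le_trans h2 ?_
      have h3 : Real.exp (t * c) * max 1 (Real.exp (s * c)) ≤ Mx := by
        rcases le_or_gt 0 c with hc0 | hc0
        · have h4 : max 1 (Real.exp (s * c)) = Real.exp (s * c) :=
            max_eq_right (by rw [← Real.exp_zero]; exact Real.exp_le_exp.mpr (by nlinarith))
          rw [h4, ← Real.exp_add]
          refine le_max_of_le_right (Real.exp_le_exp.mpr (by ring_nf; rfl))
        · have h4 : max 1 (Real.exp (s * c)) = 1 :=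
            max_eq_left (by rw [← Real.exp_zero]; exact Real.exp_le_exp.mpr (by nlinarith))
          rw [h4, mul_one]
          exact le_max_of_le_left
            (by rw [← Real.exp_zero]; exact Real.exp_le_exp.mpr (by nlinarith))
      have h5 : s ^ k ≤ (t + s) ^ k := pow_le_pow_left₀ hs0 (by linarith) k
      have h6 : ‖mexp (s • A) - PA s‖ * ‖B‖
          ≤ max 1 (Real.exp (s * c)) * (s ^ k * ‖A‖ ^ k / k.factorial) * ‖B‖ :=
        mul_le_mul_of_nonneg_right h1 hB0
      have hmax0 : (0:ℝ) ≤ max 1 (Real.exp (s * c)) := le_trans zero_le_one (le_max_left _ _)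
      have h7 : ‖V * mexp (t • H) * Vᵀ‖ * (‖mexp (s • A) - PA s‖ * ‖B‖)
          ≤ Real.exp (t * c) * (max 1 (Real.exp (s * c)) * (s ^ k * ‖A‖ ^ k / k.factorial) * ‖B‖) := by
        refine mul_le_mul hVEV h6 (by positivity) (Real.exp_pos _).le
      refine le_trans h7 ?_
      rw [hT]
      have h8 : s ^ k * ‖A‖ ^ k / k.factorial ≤ (t + s) ^ k * ‖A‖ ^ k / k.factorial := by
        have : s ^ k * ‖A‖ ^ k ≤ (t + s) ^ k * ‖A‖ ^ k :=
          mul_le_mul_of_nonneg_right h5 (by positivity)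
        exact (div_le_div_iff_of_pos_right hkf).mpr this
      have hu0 : (0:ℝ) ≤ s ^ k * ‖A‖ ^ k / k.factorial * ‖B‖ :=
        mul_nonneg (div_nonneg (mul_nonneg (pow_nonneg hs0 k) (pow_nonneg hA0 k)) hkf.le) hB0
      calc Real.exp (t * c) * ((1 ⊔ Real.exp (s * c)) * (s ^ k * ‖A‖ ^ k / k.factorial) * ‖B‖)
          = (Real.exp (t * c) * (1 ⊔ Real.exp (s * c)))
            * (s ^ k * ‖A‖ ^ k / k.factorial * ‖B‖) := by ring
      _ ≤ Mx * (s ^ k * ‖A‖ ^ k / k.factorial * ‖B‖) :=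
          mul_le_mul_of_nonneg_right h3 hu0
      _ ≤ Mx * ((t + s) ^ k * ‖A‖ ^ k / k.factorial * ‖B‖) :=
          mul_le_mul_of_nonneg_left (mul_le_mul_of_nonneg_right h8 hB0) hM0
      _ = Mx * ((t + s) ^ k * ‖A‖ ^ k / k.factorial) * ‖B‖ := by ring
    -- term 3
    have hterm3 : ‖∑ j ∈ Finset.range k,
          (s ^ j / j.factorial) • (V * ((mexp (t • H) - PH (k - j)) * W j))‖ ≤ T := by
      refine le_trans (norm_sum_le _ _) ?_
      have hmaxt : max 1 (Real.exp (t * c)) ≤ Mx :=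
        max_le hM1 (hexp_le t ht0 (by linarith))
      have hjb : ∀ j ∈ Finset.range k,
          ‖(s ^ j / j.factorial) • (V * ((mexp (t • H) - PH (k - j)) * W j))‖
          ≤ Mx * ‖A‖ ^ k * ‖B‖ * (s ^ j * t ^ (k - j) / (j.factorial * (k - j).factorial)) := by
        intro j hj
        rw [Finset.mem_range] at hj
        obtain ⟨qj, hqj⟩ : ∃ q, k - j = q + 1 := ⟨k - j - 1, by omega⟩
        have hWj : ‖W j‖ ≤ ‖A‖ ^ j * ‖B‖ := by
          rw [hW]
          calc ‖Vᵀ * (A ^ j * B)‖ ≤ ‖Vᵀ‖ * ‖A ^ j * B‖ := Matrix.l2_opNorm_mul _ _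
          _ ≤ 1 * (‖A ^ j‖ * ‖B‖) := by
              refine mul_le_mul hVtnorm (Matrix.l2_opNorm_mul _ _) (norm_nonneg _) zero_le_one
          _ ≤ ‖A‖ ^ j * ‖B‖ := by
              rw [one_mul]
              exact mul_le_mul_of_nonneg_right (norm_pow_le₀ A j) hB0
        have hRH : ‖mexp (t • H) - PH (k - j)‖
            ≤ max 1 (Real.exp (t * c)) * (t ^ (k - j) * ‖H‖ ^ (k - j) / (k - j).factorial) := by
          rw [hqj]
          exact exp_taylor_remainder H c hHexp qj ht0
        have hHk : ‖H‖ ^ (k - j) ≤ ‖A‖ ^ (k - j) :=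
          pow_le_pow_left₀ (norm_nonneg H) hHnormA _
        have hRH2 : ‖mexp (t • H) - PH (k - j)‖
            ≤ Mx * (t ^ (k - j) * ‖A‖ ^ (k - j) / (k - j).factorial) := by
          refine le_trans hRH ?_
          have h1 : t ^ (k - j) * ‖H‖ ^ (k - j) / (k - j).factorial
              ≤ t ^ (k - j) * ‖A‖ ^ (k - j) / (k - j).factorial := by
            have hkjf : (0:ℝ) < ((k - j).factorial : ℝ) := by
              exact_mod_cast (k - j).factorial_pos
            have : t ^ (k - j) * ‖H‖ ^ (k - j) ≤ t ^ (k - j) * ‖A‖ ^ (k - j) :=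
              mul_le_mul_of_nonneg_left hHk (by positivity)
            exact (div_le_div_iff_of_pos_right hkjf).mpr this
          have hmax0 : (0:ℝ) ≤ max 1 (Real.exp (t * c)) :=
            le_trans zero_le_one (le_max_left _ _)
          refine mul_le_mul hmaxt h1 (by positivity) hM0
        have hnorm_in : ‖V * ((mexp (t • H) - PH (k - j)) * W j)‖
            ≤ Mx * (t ^ (k - j) * ‖A‖ ^ (k - j) / (k - j).factorial) * (‖A‖ ^ j * ‖B‖) := by
          calc ‖V * ((mexp (t • H) - PH (k - j)) * W j)‖
              ≤ ‖V‖ * ‖(mexp (t • H) - PH (k - j)) * W j‖ := Matrix.l2_opNorm_mul _ _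
          _ ≤ 1 * (‖mexp (t • H) - PH (k - j)‖ * ‖W j‖) := by
              refine mul_le_mul hVnorm (Matrix.l2_opNorm_mul _ _) (norm_nonneg _) zero_le_one
          _ ≤ Mx * (t ^ (k - j) * ‖A‖ ^ (k - j) / (k - j).factorial) * (‖A‖ ^ j * ‖B‖) := by
              rw [one_mul]
              refine mul_le_mul hRH2 hWj (norm_nonneg _) ?_
              have hkjf : (0:ℝ) < ((k - j).factorial : ℝ) := by
                exact_mod_cast (k - j).factorial_pos
              positivity
        rw [norm_smul, Real.norm_eq_abs, abs_div, abs_of_nonneg (pow_nonneg hs0 j),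
          Nat.abs_cast]
        have hcj : (0:ℝ) ≤ s ^ j / j.factorial := by positivity
        refine le_trans (mul_le_mul_of_nonneg_left hnorm_in hcj) ?_
        have hpow : ‖A‖ ^ (k - j) * ‖A‖ ^ j = ‖A‖ ^ k := by
          rw [← pow_add]
          congr 1
          omega
        have hkjf : (0:ℝ) < ((k - j).factorial : ℝ) := by
          exact_mod_cast (k - j).factorial_pos
        have hjf : (0:ℝ) < (j.factorial : ℝ) := by exact_mod_cast j.factorial_pos
        rw [← hpow]
        field_simp
        ring_nf
        exact le_refl _
      refine le_trans (Finset.sum_le_sum hjb) ?_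
      rw [← Finset.mul_sum]
      have hps := partial_binomial_le t s ht0 hs0 k
      rw [hT]
      have hfac : (0:ℝ) ≤ Mx * ‖A‖ ^ k * ‖B‖ := by positivity
      calc Mx * ‖A‖ ^ k * ‖B‖ *
            (∑ j ∈ Finset.range k, s ^ j * t ^ (k - j) / (j.factorial * (k - j).factorial))
          ≤ Mx * ‖A‖ ^ k * ‖B‖ * ((t + s) ^ k / k.factorial) :=
            mul_le_mul_of_nonneg_left hps hfac
      _ = Mx * ((t + s) ^ k * ‖A‖ ^ k / k.factorial) * ‖B‖ := by ring
    -- combine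
    have hsum : ‖(mexp ((t + s) • A) - PA (t + s)) * B
          - (V * mexp (t • H) * Vᵀ) * ((mexp (s • A) - PA s) * B)
          - ∑ j ∈ Finset.range k,
              (s ^ j / j.factorial) • (V * ((mexp (t • H) - PH (k - j)) * W j))‖
        ≤ 3 * T := by
      refine le_trans (norm_sub_le _ _) ?_
      have h1 := norm_sub_le ((mexp ((t + s) • A) - PA (t + s)) * B)
        ((V * mexp (t • H) * Vᵀ) * ((mexp (s • A) - PA s) * B))
      linarith
    refine le_trans hsum ?_
    rw [hsmulnorm, hT]
    nlinarith [hT0, mul_nonneg (mul_nonneg hM0 (by positivity :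
      (0:ℝ) ≤ (t + s) ^ k * ‖A‖ ^ k / k.factorial)) hB0]

end
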